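/- If there exists a resolvable (N, k, 1)-BIBD with k odd and the Johnson graph J(k,2) has an orthogonal representation in ℂ^{k−1}, then the Johnson graph J(N,2) has an orthogonal representation in ℂ^{N−1}. -/

import Mathlib

open scoped BigOperators

/-- The Johnson graph `J(N,2)`. -/
def JohnsonGraph (N : ℕ) : SimpleGraph {s : Finset (Fin N) // s.card = 2} where
  Adj a b := a ≠ b ∧ ¬ Disjoint a.1 b.1
  symm := by
    constructor
    intro a b h
    exact ⟨h.1.symm, fun hd => h.2 hd.symm⟩
  loopless := by
    constructor
    intro a h
    exact h.1 rfl

/-- `G` has an orthogonal representation in `ℂ^d`. -/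
def HasOrthRep {V : Type*} (G : SimpleGraph V) (d : ℕ) : Prop :=
  ∃ f : V → (Fin d → ℂ), (∀ v, f v ≠ 0) ∧
    ∀ u v, G.Adj u v → ∑ j, (starRingEnd ℂ) (f u j) * f v j = 0


section aux
variable {N k : ℕ}

def pullback (B : Finset (Fin N)) (hB : B.card = k) (s : Finset (Fin N)) (hs : s ⊆ B) :
    Finset (Fin k) :=
  s.attach.image fun x => (B.orderIsoOfFin hB).symm ⟨x.1, hs x.2⟩

lemma pullback_card (B : Finset (Fin N)) (hB : B.card = k) (s : Finset (Fin N)) (hs : s ⊆ B) :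
    (pullback B hB s hs).card = s.card := by
  have hinj : Function.Injective (fun x : {x // x ∈ s} => (B.orderIsoOfFin hB).symm ⟨x.1, hs x.2⟩) := by
    intro x y hxy
    have := (B.orderIsoOfFin hB).symm.injective hxy
    exact Subtype.ext (Subtype.mk_eq_mk.mp this)
  rw [pullback, Finset.card_image_of_injective _ hinj, Finset.card_attach]

lemma mem_pullback {B : Finset (Fin N)} {hB : B.card = k} {s : Finset (Fin N)} {hs : s ⊆ B}
    {x : Fin N} (hx : x ∈ s) :
    (B.orderIsoOfFin hB).symm ⟨x, hs hx⟩ ∈ pullback B hB s hs :=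
  Finset.mem_image.mpr ⟨⟨x, hx⟩, s.mem_attach _, rfl⟩

lemma pullback_image (B : Finset (Fin N)) (hB : B.card = k) (s : Finset (Fin N)) (hs : s ⊆ B) :
    (pullback B hB s hs).image (fun j => ((B.orderIsoOfFin hB) j : Fin N)) = s := by
  rw [pullback, Finset.image_image]
  have h : ((fun j => ((B.orderIsoOfFin hB) j : Fin N)) ∘ fun x : {x // x ∈ s} =>
      (B.orderIsoOfFin hB).symm ⟨x.1, hs x.2⟩) = fun x => x.1 := by
    funext x
    exact congrArg Subtype.val ((B.orderIsoOfFin hB).apply_symm_apply ⟨x.1, hs x.2⟩)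
  rw [h, Finset.attach_image_val]

lemma pullback_congr {B B' : Finset (Fin N)} (h : B = B') (hB : B.card = k)
    (hB' : B'.card = k) (s : Finset (Fin N)) (hs : s ⊆ B) (hs' : s ⊆ B') :
    pullback B hB s hs = pullback B' hB' s hs' := by
  subst h; rfl

end aux

/-- If there exists a resolvable `(N,k,1)`-BIBD with `k` odd and `J(k,2)` has an
orthogonal representation in `ℂ^{k-1}`, then `J(N,2)` has an orthogonal
representation in `ℂ^{N-1}`. -/
theorem johnson_orthRep_of_rbibd (N k m : ℕ) (hk : Odd k)
    (t : Fin m → Finset (Finset (Fin N)))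
    (hblock : ∀ i, ∀ B ∈ t i, B.card = k)
    (hres : ∀ i, ∀ p : Fin N, ∃! B, B ∈ t i ∧ p ∈ B)
    (hpair : ∀ p q : Fin N, p ≠ q →
      ∃! ib : Fin m × Finset (Fin N), ib.2 ∈ t ib.1 ∧ p ∈ ib.2 ∧ q ∈ ib.2)
    (hrep : HasOrthRep (JohnsonGraph k) (k - 1)) :
    HasOrthRep (JohnsonGraph N) (N - 1) := by
  classical
  by_cases hN : N < 2
  · have hV : IsEmpty {s : Finset (Fin N) // s.card = 2} := by
      constructor
      rintro ⟨s, hs⟩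
      have h1 : s.card ≤ N := by
        simpa using Finset.card_le_card (Finset.subset_univ s)
      omega
    exact ⟨isEmptyElim, fun v => isEmptyElim v, fun u v _ => isEmptyElim u⟩
  push_neg at hN
  obtain ⟨g, hg0, hgo⟩ := hrep
  -- the unique block through each vertex (pair)
  have hvb : ∀ a : {s : Finset (Fin N) // s.card = 2},
      ∃! ib : Fin m × Finset (Fin N), ib.2 ∈ t ib.1 ∧ a.1 ⊆ ib.2 := by
    rintro ⟨s, hs⟩
    obtain ⟨p, q, hpq, rfl⟩ := Finset.card_eq_two.mp hs
    obtain ⟨ib, ⟨h1, h2, h3⟩, hu⟩ := hpair p q hpq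
    refine ⟨ib, ⟨h1, ?_⟩, ?_⟩
    · rw [Finset.insert_subset_iff, Finset.singleton_subset_iff]; exact ⟨h2, h3⟩
    · rintro jb ⟨hj1, hj2⟩
      rw [Finset.insert_subset_iff, Finset.singleton_subset_iff] at hj2
      exact hu jb ⟨hj1, hj2.1, hj2.2⟩
  set P : {s : Finset (Fin N) // s.card = 2} → Fin m × Finset (Fin N) :=
    fun a => (hvb a).choose with hPdef
  have hP1 : ∀ a, (P a).2 ∈ t (P a).1 := fun a => (hvb a).choose_spec.1.1
  have hP2 : ∀ a, a.1 ⊆ (P a).2 := fun a => (hvb a).choose_spec.1.2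
  have hPu : ∀ a (ib : Fin m × Finset (Fin N)), ib.2 ∈ t ib.1 → a.1 ⊆ ib.2 → ib = P a :=
    fun a ib h1 h2 => (hvb a).choose_spec.2 ib ⟨h1, h2⟩
  have hPk : ∀ a, (P a).2.card = k := fun a => hblock _ _ (hP1 a)
  -- counting: N - 1 = m * (k - 1)
  have hp0 : 0 < N := by omega
  set p0 : Fin N := ⟨0, hp0⟩ with hp0def
  set Bp : Fin m → Finset (Fin N) := fun i => (hres i p0).choose with hBpdef
  have hBp1 : ∀ i, Bp i ∈ t i ∧ p0 ∈ Bp i := fun i => (hres i p0).choose_spec.1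
  have hBpu : ∀ i B, B ∈ t i → p0 ∈ B → B = Bp i := fun i B h1 h2 =>
    (hres i p0).choose_spec.2 B ⟨h1, h2⟩
  have hNm : N - 1 = m * (k - 1) := by
    have hdisj : ∀ i ∈ (Finset.univ : Finset (Fin m)), ∀ i' ∈ Finset.univ, i ≠ i' →
        Disjoint ((Bp i).erase p0) ((Bp i').erase p0) := by
      intro i _ i' _ hne
      rw [Finset.disjoint_left]
      intro q hq hq'
      have hq0 : q ≠ p0 := Finset.ne_of_mem_erase hq
      obtain ⟨ib, _, hu⟩ := hpair p0 q (Ne.symm hq0)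
      have h1 := hu (i, Bp i) ⟨(hBp1 i).1, (hBp1 i).2, Finset.mem_of_mem_erase hq⟩
      have h2 := hu (i', Bp i') ⟨(hBp1 i').1, (hBp1 i').2, Finset.mem_of_mem_erase hq'⟩
      have : ((i, Bp i) : Fin m × Finset (Fin N)) = (i', Bp i') := h1.trans h2.symm
      exact hne (congrArg Prod.fst this)
    have hunion : Finset.univ.biUnion (fun i => (Bp i).erase p0) = Finset.univ.erase p0 := by
      ext q
      simp only [Finset.mem_biUnion, Finset.mem_erase, Finset.mem_univ, and_true, true_and]
      constructor
      · rintro ⟨i, hq⟩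
        exact hq.1
      · intro hq
        obtain ⟨⟨i, B⟩, ⟨hB, hp0B, hqB⟩, -⟩ := hpair p0 q (Ne.symm hq)
        refine ⟨i, hq, ?_⟩
        rw [← hBpu i B hB hp0B]
        exact hqB
    have hcard := Finset.card_biUnion hdisj
    rw [hunion] at hcard
    have h1 : (Finset.univ.erase p0).card = N - 1 := by
      rw [Finset.card_erase_of_mem (Finset.mem_univ _), Finset.card_univ, Fintype.card_fin]
    have h2 : ∀ i ∈ (Finset.univ : Finset (Fin m)), ((Bp i).erase p0).card = k - 1 := by
      intro i _
      rw [Finset.card_erase_of_mem (hBp1 i).2, hblock i _ (hBp1 i).1]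
    rw [h1, Finset.sum_congr rfl h2, Finset.sum_const, Finset.card_univ, Fintype.card_fin,
      smul_eq_mul] at hcard
    exact hcard
  -- the representation
  set e : Fin (N - 1) ≃ Fin m × Fin (k - 1) :=
    (finCongr hNm).trans finProdFinEquiv.symm with hedef
  have hsacard : ∀ a : {s : Finset (Fin N) // s.card = 2},
      (pullback (P a).2 (hPk a) a.1 (hP2 a)).card = 2 := by
    intro a
    rw [pullback_card]
    exact a.2
  set va : {s : Finset (Fin N) // s.card = 2} → {s : Finset (Fin k) // s.card = 2} :=
    fun a => ⟨pullback (P a).2 (hPk a) a.1 (hP2 a), hsacard a⟩ with hvadef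
  refine ⟨fun a x => if (e x).1 = (P a).1 then g (va a) (e x).2 else 0, ?_, ?_⟩
  · intro a hfa
    obtain ⟨j, hj⟩ := Function.ne_iff.mp (hg0 (va a))
    have hx : e (e.symm ((P a).1, j)) = ((P a).1, j) := e.apply_symm_apply _
    have := congrFun hfa (e.symm ((P a).1, j))
    simp only [hx, if_pos rfl, Pi.zero_apply] at this
    exact hj this
  · rintro a b ⟨hab, hnd⟩
    obtain ⟨x, hxa, hxb⟩ := Finset.not_disjoint_iff.mp hnd
    have hsum : ∑ j : Fin (N - 1),
        (starRingEnd ℂ) ((if (e j).1 = (P a).1 then g (va a) (e j).2 else 0))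
          * (if (e j).1 = (P b).1 then g (va b) (e j).2 else 0)
        = ∑ p : Fin m × Fin (k - 1),
        (starRingEnd ℂ) ((if p.1 = (P a).1 then g (va a) p.2 else 0))
          * (if p.1 = (P b).1 then g (va b) p.2 else 0) := by
      refine Fintype.sum_equiv e _ _ ?_
      intro j
      rfl
    rw [hsum]
    by_cases hii : (P a).1 = (P b).1
    · -- same class, hence same block
      have hBab : (P a).2 = (P b).2 := by
        have h1 := hBpu
        have hxa' : x ∈ (P a).2 := hP2 a hxa
        have hxb' : x ∈ (P b).2 := hP2 b hxb
        have u1 := (hres (P a).1 x).choose_spec.2 (P a).2 ⟨hP1 a, hxa'⟩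
        have u2 := (hres (P a).1 x).choose_spec.2 (P b).2 ⟨hii ▸ hP1 b, hxb'⟩
        exact u1.trans u2.symm
      have hadj : (JohnsonGraph k).Adj (va a) (va b) := by
        constructor
        · intro hvv
          apply hab
          have hv : pullback (P a).2 (hPk a) a.1 (hP2 a)
              = pullback (P b).2 (hPk b) b.1 (hP2 b) := congrArg Subtype.val hvv
          have hsub : b.1 ⊆ (P a).2 := by rw [hBab]; exact hP2 b
          have hv' : pullback (P a).2 (hPk a) a.1 (hP2 a)
              = pullback (P a).2 (hPk a) b.1 hsub := by
            rw [hv]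
            exact pullback_congr hBab.symm (hPk b) (hPk a) b.1 (hP2 b) hsub
          apply Subtype.ext
          calc a.1 = (pullback (P a).2 (hPk a) a.1 (hP2 a)).image
                (fun j => (((P a).2.orderIsoOfFin (hPk a)) j : Fin N)) :=
              (pullback_image _ _ _ _).symm
            _ = (pullback (P a).2 (hPk a) b.1 hsub).image
                (fun j => (((P a).2.orderIsoOfFin (hPk a)) j : Fin N)) := by rw [hv']
            _ = b.1 := pullback_image _ _ _ _
        · rw [Finset.not_disjoint_iff]
          refine ⟨(((P a).2).orderIsoOfFin (hPk a)).symm ⟨x, hP2 a hxa⟩,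
            mem_pullback hxa, ?_⟩
          have : va b = ⟨pullback (P a).2 (hPk a) b.1 (hBab ▸ hP2 b), by
              rw [pullback_card]; exact b.2⟩ := by
            apply Subtype.ext
            simp only [hvadef]
            congr 1
            · exact hBab.symm
          rw [this]
          exact mem_pullback (hs := by rw [hBab]; exact hP2 b) hxb
      have hzero := hgo (va a) (va b) hadj
      rw [Fintype.sum_prod_type]
      rw [Finset.sum_eq_single (P a).1]
      · simp only [if_pos rfl, hii, if_pos rfl]
        exact hzero
      · intro i _ hi
        apply Finset.sum_eq_zero
        intro j _
        have ha : ¬ ((i, j).1 = (P a).1) := hi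
        rw [if_neg ha, map_zero, zero_mul]
      · intro h
        exact absurd (Finset.mem_univ _) h
    · apply Finset.sum_eq_zero
      rintro ⟨i, j⟩ _
      by_cases hia : i = (P a).1
      · have hb : ¬ ((i, j).1 = (P b).1) := by
          intro h
          exact hii (by rw [← hia]; exact h)
        rw [if_neg hb, mul_zero]
      · have ha : ¬ ((i, j).1 = (P a).1) := hia
        rw [if_neg ha, map_zero, zero_mul]
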